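/- Assume T_{2n} > T* for all n ∈ ℕ and set c_n := M² e^{−2μ T_{2n}}. Then every trajectory U of the on–off anti-damped system with initial datum U₀ satisfies, for every n ∈ ℕ, the iterated estimate ‖U(t_{2n+2})‖² ≤ [ ∏_{k=0}^{n} e^{2 D_{2k+1} T_{2k+1}} c_k ] · ‖U₀‖². -/

import Mathlib

theorem stmt_16
    {H : Type*} [NormedAddCommGroup H] [InnerProductSpace ℝ H]
    (S : ℝ → H →L[ℝ] H) (M μ : ℝ)
    (hM : 1 ≤ M) (hμ : 0 < μ)
    (hS0 : S 0 = ContinuousLinearMap.id ℝ H)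
    (hSadd : ∀ s u : ℝ, 0 ≤ s → 0 ≤ u → S (s + u) = (S s).comp (S u))
    (hScont : ∀ x : H, ContinuousOn (fun s => S s x) (Set.Ici (0:ℝ)))
    (hSbound : ∀ s : ℝ, 0 ≤ s → ‖S s‖ ≤ M * Real.exp (-μ * s))
    (hScontr : ∀ s : ℝ, 0 ≤ s → ∀ x : H, ‖S s x‖ ≤ ‖x‖)
    (t : ℕ → ℝ) (ht0 : t 0 = 0) (htmono : StrictMono t)
    (htlim : Filter.Tendsto t Filter.atTop Filter.atTop)
    (D : ℕ → H →L[ℝ] H)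
    (hDpos : ∀ (n : ℕ) (x : H), (0:ℝ) ≤ inner ℝ (D n x) x)
    (hT2nstar : ∀ n : ℕ, Real.log M / μ < t (2*n+1) - t (2*n))
    (U : ℝ → H) (U₀ : H) (V : ℝ → H)
    (hUcont : ContinuousOn U (Set.Ici (0:ℝ))) (hU0 : U 0 = U₀)
    (hUeven : ∀ n : ℕ, ∀ s ∈ Set.Icc (t (2*n)) (t (2*n+1)),
      U s = S (s - t (2*n)) (U (t (2*n))))
    (hUodd : ∀ n : ℕ, ∀ s ∈ Set.Ioo (t (2*n+1)) (t (2*n+2)),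
      HasDerivAt U (V s + D n (U s)) s)
    (hdiss : ∀ n : ℕ, ∀ s ∈ Set.Ioo (t (2*n+1)) (t (2*n+2)),
      (inner ℝ (U s) (V s) : ℝ) ≤ 0)
    :
    ∀ n : ℕ,
      ‖U (t (2*n+2))‖^2 ≤
        (∏ k ∈ Finset.range (n+1),
          Real.exp (2*‖D k‖*(t (2*k+2) - t (2*k+1))) *
            (M^2 * Real.exp (-2*μ*(t (2*k+1) - t (2*k))))) *
          ‖U₀‖^2 := by
  -- every t n is nonnegative
  have htnn : ∀ m : ℕ, 0 ≤ t m := fun m => ht0 ▸ htmono.monotone (Nat.zero_le m)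
  -- even-interval estimate
  have even_step : ∀ n : ℕ,
      ‖U (t (2*n+1))‖^2 ≤ M^2 * Real.exp (-2*μ*(t (2*n+1) - t (2*n))) * ‖U (t (2*n))‖^2 := by
    intro n
    have hle : t (2*n) ≤ t (2*n+1) := (htmono (by omega)).le
    have hU1 : U (t (2*n+1)) = S (t (2*n+1) - t (2*n)) (U (t (2*n))) :=
      hUeven n _ ⟨hle, le_rfl⟩
    set Δ := t (2*n+1) - t (2*n) with hΔ
    have hΔ0 : 0 ≤ Δ := by simp [hΔ]; linarith
    have hb : ‖U (t (2*n+1))‖ ≤ M * Real.exp (-μ * Δ) * ‖U (t (2*n))‖ := by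
      rw [hU1]
      calc ‖S Δ (U (t (2*n)))‖ ≤ ‖S Δ‖ * ‖U (t (2*n))‖ := (S Δ).le_opNorm _
        _ ≤ M * Real.exp (-μ * Δ) * ‖U (t (2*n))‖ := by
            apply mul_le_mul_of_nonneg_right (hSbound Δ hΔ0) (norm_nonneg _)
    have hsq := pow_le_pow_left₀ (norm_nonneg _) hb 2
    have hexp : (M * Real.exp (-μ * Δ) * ‖U (t (2*n))‖)^2
        = M^2 * Real.exp (-2*μ*Δ) * ‖U (t (2*n))‖^2 := by
      have : Real.exp (-μ * Δ) ^ 2 = Real.exp (-2*μ*Δ) := by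
        rw [sq, ← Real.exp_add]; congr 1; ring
      rw [mul_pow, mul_pow, this]
    rw [hexp] at hsq
    exact hsq
  -- odd-interval estimate (Gronwall)
  have odd_step : ∀ n : ℕ,
      ‖U (t (2*n+2))‖^2 ≤ Real.exp (2*‖D n‖*(t (2*n+2) - t (2*n+1))) * ‖U (t (2*n+1))‖^2 := by
    intro n
    set a := t (2*n+1) with ha
    set b := t (2*n+2) with hb
    set K := ‖D n‖ with hK
    have hK0 : 0 ≤ K := norm_nonneg _
    have hab : a < b := htmono (by omega)
    have ha0 : 0 ≤ a := htnn _
    set g : ℝ → ℝ := fun s => Real.exp (-(2*K)*s) * ‖U s‖^2 with hg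
    have hsub : Set.Icc a b ⊆ Set.Ici (0:ℝ) := fun x hx => le_trans ha0 hx.1
    have hgcont : ContinuousOn g (Set.Icc a b) := by
      apply ContinuousOn.mul
      · exact (Real.continuous_exp.comp (continuous_const.mul continuous_id)).continuousOn
      · exact ((hUcont.mono hsub).norm).pow 2
    have hderiv : ∀ s ∈ Set.Ioo a b,
        HasDerivAt g (-(2*K) * Real.exp (-(2*K)*s) * ‖U s‖^2
          + Real.exp (-(2*K)*s) * ((inner ℝ (U s) (V s + D n (U s)) : ℝ)
            + (inner ℝ (V s + D n (U s)) (U s) : ℝ))) s := by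
      intro s hs
      have hU' : HasDerivAt U (V s + D n (U s)) s := hUodd n s hs
      have hf : HasDerivAt (fun s => (inner ℝ (U s) (U s) : ℝ))
          ((inner ℝ (U s) (V s + D n (U s)) : ℝ) + (inner ℝ (V s + D n (U s)) (U s) : ℝ)) s :=
        HasDerivAt.inner ℝ hU' hU'
      have hexp : HasDerivAt (fun s : ℝ => Real.exp (-(2*K)*s))
          (-(2*K) * Real.exp (-(2*K)*s)) s := by
        have h1 : HasDerivAt (fun s : ℝ => -(2*K)*s) (-(2*K)) s := by
          simpa using (hasDerivAt_id s).const_mul (-(2*K))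
        simpa [mul_comm] using h1.exp
      have := hexp.mul hf
      have heq : ∀ x : H, (inner ℝ x x : ℝ) = ‖x‖^2 := fun x => real_inner_self_eq_norm_sq x
      simp only [heq] at this; exact this
    have hderiv_np : ∀ s ∈ Set.Ioo a b,
        (-(2*K) * Real.exp (-(2*K)*s) * ‖U s‖^2
          + Real.exp (-(2*K)*s) * ((inner ℝ (U s) (V s + D n (U s)) : ℝ)
            + (inner ℝ (V s + D n (U s)) (U s) : ℝ))) ≤ 0 := by
      intro s hs
      have h1 : (inner ℝ (U s) (V s) : ℝ) ≤ 0 := hdiss n s hs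
      have h2 : (inner ℝ (D n (U s)) (U s) : ℝ) ≤ K * ‖U s‖^2 := by
        calc (inner ℝ (D n (U s)) (U s) : ℝ) ≤ ‖D n (U s)‖ * ‖U s‖ := real_inner_le_norm _ _
          _ ≤ (K * ‖U s‖) * ‖U s‖ :=
              mul_le_mul_of_nonneg_right ((D n).le_opNorm _) (norm_nonneg _)
          _ = K * ‖U s‖^2 := by ring
      have hsymm : (inner ℝ (U s) (D n (U s)) : ℝ) = (inner ℝ (D n (U s)) (U s) : ℝ) :=
        real_inner_comm _ _
      have hsymm2 : (inner ℝ (V s) (U s) : ℝ) = (inner ℝ (U s) (V s) : ℝ) := real_inner_comm _ _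
      have hep : 0 < Real.exp (-(2*K)*s) := Real.exp_pos _
      have hin1 : (inner ℝ (U s) (V s + D n (U s)) : ℝ)
          = (inner ℝ (U s) (V s) : ℝ) + (inner ℝ (D n (U s)) (U s) : ℝ) := by
        rw [inner_add_right, hsymm]
      have hin2 : (inner ℝ (V s + D n (U s)) (U s) : ℝ)
          = (inner ℝ (U s) (V s) : ℝ) + (inner ℝ (D n (U s)) (U s) : ℝ) := by
        rw [inner_add_left, hsymm2]
      rw [hin1, hin2]
      nlinarith [hep, h1, h2, sq_nonneg (‖U s‖)]
    have hanti : AntitoneOn g (Set.Icc a b) := by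
      apply antitoneOn_of_deriv_nonpos (convex_Icc a b) hgcont
      · intro x hx
        rw [interior_Icc] at hx
        exact ((hderiv x hx).differentiableAt).differentiableWithinAt
      · intro x hx
        rw [interior_Icc] at hx
        rw [(hderiv x hx).deriv]
        exact hderiv_np x hx
    have hga : g b ≤ g a :=
      hanti (Set.left_mem_Icc.2 hab.le) (Set.right_mem_Icc.2 hab.le) hab.le
    have hbpos : 0 < Real.exp ((2*K)*b) := Real.exp_pos _
    have : Real.exp ((2*K)*b) * g b ≤ Real.exp ((2*K)*b) * g a :=
      mul_le_mul_of_nonneg_left hga hbpos.le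
    have e1 : Real.exp ((2*K)*b) * g b = ‖U b‖^2 := by
      simp only [hg]
      rw [← mul_assoc, ← Real.exp_add]
      norm_num
    have e2 : Real.exp ((2*K)*b) * g a = Real.exp (2*K*(b - a)) * ‖U a‖^2 := by
      simp only [hg]
      rw [← mul_assoc, ← Real.exp_add]
      congr 2
      ring
    rw [e1, e2] at this
    exact this
  -- induction
  intro n
  induction n with
  | zero =>
      have h1 := odd_step 0
      have h2 := even_step 0
      have hU00 : U (t (2*0)) = U₀ := by
        have : t (2*0) = 0 := by simpa using ht0
        rw [this, hU0]
      rw [hU00] at h2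
      have hcnn : 0 ≤ M^2 * Real.exp (-2*μ*(t (2*0+1) - t (2*0))) :=
        mul_nonneg (sq_nonneg _) (Real.exp_pos _).le
      have henn : 0 ≤ Real.exp (2*‖D 0‖*(t (2*0+2) - t (2*0+1))) := (Real.exp_pos _).le
      calc ‖U (t (2*0+2))‖^2
          ≤ Real.exp (2*‖D 0‖*(t (2*0+2) - t (2*0+1))) * ‖U (t (2*0+1))‖^2 := h1
        _ ≤ Real.exp (2*‖D 0‖*(t (2*0+2) - t (2*0+1))) *
              (M^2 * Real.exp (-2*μ*(t (2*0+1) - t (2*0))) * ‖U₀‖^2) :=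
            mul_le_mul_of_nonneg_left h2 henn
        _ = (∏ k ∈ Finset.range 1,
              Real.exp (2*‖D k‖*(t (2*k+2) - t (2*k+1))) *
                (M^2 * Real.exp (-2*μ*(t (2*k+1) - t (2*k))))) * ‖U₀‖^2 := by
            rw [Finset.prod_range_one]; ring
  | succ n ih =>
      have h1 := odd_step (n+1)
      have h2 := even_step (n+1)
      have heven_eq : t (2*(n+1)) = t (2*n+2) := by norm_num; ring_nf
      have hprodnn : 0 ≤ ∏ k ∈ Finset.range (n+1),
          Real.exp (2*‖D k‖*(t (2*k+2) - t (2*k+1))) *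
            (M^2 * Real.exp (-2*μ*(t (2*k+1) - t (2*k)))) := by
        apply Finset.prod_nonneg
        intro k _
        exact mul_nonneg (Real.exp_pos _).le (mul_nonneg (sq_nonneg _) (Real.exp_pos _).le)
      have henn : 0 ≤ Real.exp (2*‖D (n+1)‖*(t (2*(n+1)+2) - t (2*(n+1)+1))) :=
        (Real.exp_pos _).le
      have hcnn : 0 ≤ M^2 * Real.exp (-2*μ*(t (2*(n+1)+1) - t (2*(n+1)))) :=
        mul_nonneg (sq_nonneg _) (Real.exp_pos _).le
      have key : ‖U (t (2*(n+1)))‖^2 ≤ (∏ k ∈ Finset.range (n+1),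
          Real.exp (2*‖D k‖*(t (2*k+2) - t (2*k+1))) *
            (M^2 * Real.exp (-2*μ*(t (2*k+1) - t (2*k))))) * ‖U₀‖^2 := by
        rw [heven_eq]; exact ih
      calc ‖U (t (2*(n+1)+2))‖^2
          ≤ Real.exp (2*‖D (n+1)‖*(t (2*(n+1)+2) - t (2*(n+1)+1))) * ‖U (t (2*(n+1)+1))‖^2 := h1
        _ ≤ Real.exp (2*‖D (n+1)‖*(t (2*(n+1)+2) - t (2*(n+1)+1))) *
              (M^2 * Real.exp (-2*μ*(t (2*(n+1)+1) - t (2*(n+1)))) *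
                ((∏ k ∈ Finset.range (n+1),
                  Real.exp (2*‖D k‖*(t (2*k+2) - t (2*k+1))) *
                    (M^2 * Real.exp (-2*μ*(t (2*k+1) - t (2*k))))) * ‖U₀‖^2)) := by
            apply mul_le_mul_of_nonneg_left _ henn
            exact le_trans h2 (mul_le_mul_of_nonneg_left key hcnn)
        _ = (∏ k ∈ Finset.range (n+1+1),
              Real.exp (2*‖D k‖*(t (2*k+2) - t (2*k+1))) *
                (M^2 * Real.exp (-2*μ*(t (2*k+1) - t (2*k))))) * ‖U₀‖^2 := by
            conv_rhs => rw [Finset.prod_range_succ]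
            ring
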